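/- Let C be a cost structure over alphabets α, β with costs in ℕ, let k ∈ ℕ, and let C + k denote the cost structure obtained by adding k to every insert, delete, and substitution cost of C. Then for all lists Q and R of lengths m and n respectively, levenshtein C Q R + max(m, n)·k ≤ levenshtein (C + k) Q R. -/

import Mathlib

/-- Costs for the Levenshtein distance (Mathlib's former `Levenshtein.Cost`,
removed from Mathlib; restored here with its old definition). -/
structure Levenshtein.Cost (α β δ : Type*) where
  /-- Cost to delete an element from a list. -/
  delete : α → δ
  /-- Cost in insert an element into a list. -/
  insert : β → δ
  /-- Cost to substitute one element for another in a list. -/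
  substitute : α → β → δ

/-- Mathlib's former `Levenshtein.impl`. -/
def Levenshtein.impl {α β δ : Type*} [AddZeroClass δ] [Min δ]
    (C : Levenshtein.Cost α β δ)
    (xs : List α) (y : β) (d : {r : List δ // 0 < r.length}) : {r : List δ // 0 < r.length} :=
  let ⟨ds, w⟩ := d
  xs.zip (ds.zip ds.tail) |>.foldr
    (init := ⟨[C.insert y + ds.getLast (List.ne_nil_of_length_pos w)], by simp⟩)
    (fun ⟨x, d₀, d₁⟩ ⟨r, w⟩ =>
      ⟨min (C.delete x + r[0]) (min (C.insert y + d₀) (C.substitute x y + d₁)) :: r, by simp⟩)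

/-- Mathlib's former `suffixLevenshtein`. -/
def suffixLevenshtein {α β δ : Type*} [AddZeroClass δ] [Min δ]
    (C : Levenshtein.Cost α β δ) (xs : List α) (ys : List β) :
    {r : List δ // 0 < r.length} :=
  ys.foldr
    (Levenshtein.impl C xs)
    (xs.foldr (init := ⟨[0], by simp⟩) (fun a ⟨r, w⟩ => ⟨(C.delete a + r[0]) :: r, by simp⟩))

/-- Mathlib's former `levenshtein`. -/
def levenshtein {α β δ : Type*} [AddZeroClass δ] [Min δ]
    (C : Levenshtein.Cost α β δ) (xs : List α) (ys : List β) : δ :=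
  let ⟨r, w⟩ := suffixLevenshtein C xs ys
  r[0]


/-- The cost structure obtained by adding `k` to every insert, delete, and
substitution cost of `C`. -/
def Levenshtein.Cost.addConst {α β : Type*} (C : Levenshtein.Cost α β ℕ) (k : ℕ) :
    Levenshtein.Cost α β ℕ where
  delete a := C.delete a + k
  insert b := C.insert b + k
  substitute a b := C.substitute a b + k

section LevHelpers

theorem Levenshtein.impl_cons' {α β δ : Type*} [AddZeroClass δ] [Min δ]
    (C : Levenshtein.Cost α β δ) (x : α) (xs : List α) (y : β) (d : δ) (ds : List δ)
    (w : 0 < (d :: ds).length) (w' : 0 < List.length ds) :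
    Levenshtein.impl C (x :: xs) y ⟨d :: ds, w⟩ =
      let ⟨r, w⟩ := Levenshtein.impl C xs y ⟨ds, w'⟩
      ⟨min (C.delete x + r[0]) (min (C.insert y + d) (C.substitute x y + ds[0])) :: r, by simp⟩ :=
  match ds, w' with | _ :: _, _ => rfl

theorem Levenshtein.impl_length' {α β δ : Type*} [AddZeroClass δ] [Min δ]
    (C : Levenshtein.Cost α β δ) (xs : List α) (y : β)
    (d : {r : List δ // 0 < r.length}) (w : d.1.length = xs.length + 1) :
    (Levenshtein.impl C xs y d).1.length = xs.length + 1 := by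
  induction xs generalizing d with
  | nil => rfl
  | cons x xs ih =>
    dsimp [Levenshtein.impl]
    match d, w with
    | ⟨d₁ :: d₂ :: ds, _⟩, w =>
      dsimp
      congr 1
      exact ih ⟨d₂ :: ds, (by simp)⟩ (by simpa using w)

theorem suffixLevenshtein_length' {α β δ : Type*} [AddZeroClass δ] [Min δ]
    (C : Levenshtein.Cost α β δ) (xs : List α) (ys : List β) :
    (suffixLevenshtein C xs ys).1.length = xs.length + 1 := by
  induction ys with
  | nil =>
    dsimp [suffixLevenshtein]
    induction xs with
    | nil => rfl
    | cons _ xs ih =>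
      simp_all
  | cons y ys ih =>
    dsimp [suffixLevenshtein]
    rw [Levenshtein.impl_length']
    exact ih

theorem suffixLevenshtein_cons₁_aux' {α : Type*} {x y : {r : List α // 0 < r.length}}
    (w₀ : x.1[0]'x.2 = y.1[0]'y.2) (w : x.1.tail = y.1.tail) : x = y := by
  match x, y with
  | ⟨hx :: tx, _⟩, ⟨hy :: ty, _⟩ => simp_all

theorem suffixLevenshtein_cons₁' {α β δ : Type*} [AddZeroClass δ] [Min δ]
    (C : Levenshtein.Cost α β δ) (x : α) (xs : List α) (ys : List β) :
    suffixLevenshtein C (x :: xs) ys =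
      ⟨levenshtein C (x :: xs) ys :: (suffixLevenshtein C xs ys).1, by simp⟩ := by
  induction ys with
  | nil =>
    dsimp [levenshtein, suffixLevenshtein]
    rfl
  | cons y ys ih =>
    apply suffixLevenshtein_cons₁_aux'
    · rfl
    · show (Levenshtein.impl C (x :: xs) y (suffixLevenshtein C (x :: xs) ys)).1.tail = _
      rw [ih, Levenshtein.impl_cons']
      · rfl
      · simp [suffixLevenshtein_length']

theorem levenshtein_nil_cons {α β δ : Type*} [AddZeroClass δ] [Min δ]
    (C : Levenshtein.Cost α β δ) (y : β) (ys : List β) :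
    levenshtein C ([] : List α) (y :: ys) = C.insert y + levenshtein C [] ys := by
  have h := suffixLevenshtein_length' C ([] : List α) ys
  show (Levenshtein.impl C [] y (suffixLevenshtein C [] ys)).1[0]'(Levenshtein.impl C [] y (suffixLevenshtein C [] ys)).2 = C.insert y + (suffixLevenshtein C [] ys).1[0]'(suffixLevenshtein C [] ys).2
  generalize suffixLevenshtein C ([] : List α) ys = s at h ⊢
  obtain ⟨r, w⟩ := s
  cases r with
  | nil => simp at w
  | cons a l =>
    cases l with
    | nil => rfl
    | cons b l => simp at h

theorem levenshtein_cons_nil {α β δ : Type*} [AddZeroClass δ] [Min δ]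
    (C : Levenshtein.Cost α β δ) (x : α) (xs : List α) :
    levenshtein C (x :: xs) ([] : List β) = C.delete x + levenshtein C xs [] := rfl

theorem levenshtein_cons_cons {α β δ : Type*} [AddZeroClass δ] [Min δ]
    (C : Levenshtein.Cost α β δ) (x : α) (xs : List α) (y : β) (ys : List β) :
    levenshtein C (x :: xs) (y :: ys) =
      min (C.delete x + levenshtein C xs (y :: ys))
        (min (C.insert y + levenshtein C (x :: xs) ys)
          (C.substitute x y + levenshtein C xs ys)) := by
  show (Levenshtein.impl C (x :: xs) y (suffixLevenshtein C (x :: xs) ys)).1[0]'(Levenshtein.impl C (x :: xs) y (suffixLevenshtein C (x :: xs) ys)).2 = _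
  have h1 := suffixLevenshtein_cons₁' C x xs ys
  have hl := suffixLevenshtein_length' C xs ys
  rw [h1, Levenshtein.impl_cons' (w' := by omega)]
  rfl

@[simp] theorem levenshtein_nil_nil {α β δ : Type*} [AddZeroClass δ] [Min δ]
    (C : Levenshtein.Cost α β δ) : levenshtein C ([] : List α) ([] : List β) = 0 := rfl

end LevHelpers

/-- **Lower bound for shifted gap penalties (Lemma 3, lower half).**
Adding `k` to every cost increases the Levenshtein distance by at least
`max(m, n)·k`, where `m` and `n` are the lengths of the two lists, since every
alignment uses at least `max(m, n)` edit operations. -/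
theorem levenshtein_addConst_ge {α β : Type*} (C : Levenshtein.Cost α β ℕ) (k : ℕ)
    (Q : List α) (R : List β) :
    levenshtein C Q R + max Q.length R.length * k ≤
      levenshtein (Levenshtein.Cost.addConst C k) Q R := by
  induction Q generalizing R with
  | nil =>
    induction R with
    | nil => simp
    | cons y ys ihR =>
      simp only [levenshtein_nil_cons, List.length_nil, List.length_cons,
        Nat.max_eq_right (Nat.zero_le _)] at *
      show _ ≤ C.insert y + k + _
      have : (ys.length + 1) * k = ys.length * k + k := by ring
      omega
  | cons x xs ih =>
    induction R with
    | nil =>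
      have := ih ([] : List β)
      simp only [levenshtein_cons_nil, List.length_nil, List.length_cons,
        Nat.max_eq_left (Nat.zero_le _)] at *
      show _ ≤ C.delete x + k + _
      have : (xs.length + 1) * k = xs.length * k + k := by ring
      omega
    | cons y ys ihR =>
      simp only [levenshtein_cons_cons, List.length_cons]
      refine le_min ?_ (le_min ?_ ?_)
      · have h := ih (y :: ys)
        have hm : max (xs.length + 1) (ys.length + 1) ≤ max xs.length (ys.length + 1) + 1 := by
          omega
        calc min (C.delete x + levenshtein C xs (y :: ys)) _ + max (xs.length + 1) (ys.length + 1) * k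
            ≤ C.delete x + levenshtein C xs (y :: ys) + (max xs.length (ys.length + 1) + 1) * k := by
              have := min_le_left (C.delete x + levenshtein C xs (y :: ys))
                (min (C.insert y + levenshtein C (x :: xs) ys) (C.substitute x y + levenshtein C xs ys))
              have := Nat.mul_le_mul_right k hm
              have : (max xs.length (ys.length + 1) + 1) * k
                  = max xs.length (ys.length + 1) * k + k := by ring
              omega
          _ ≤ (C.delete x + k) + levenshtein (Levenshtein.Cost.addConst C k) xs (y :: ys) := by
              simp only [List.length_cons] at h
              have : (max xs.length (ys.length + 1) + 1) * k
                  = max xs.length (ys.length + 1) * k + k := by ring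
              omega
          _ = _ := rfl
      · have h := ihR
        have hm : max (xs.length + 1) (ys.length + 1) ≤ max (xs.length + 1) ys.length + 1 := by
          omega
        calc min _ (min (C.insert y + levenshtein C (x :: xs) ys) _) + max (xs.length + 1) (ys.length + 1) * k
            ≤ C.insert y + levenshtein C (x :: xs) ys + (max (xs.length + 1) ys.length + 1) * k := by
              have h1 := min_le_right (C.delete x + levenshtein C xs (y :: ys))
                (min (C.insert y + levenshtein C (x :: xs) ys) (C.substitute x y + levenshtein C xs ys))
              have h2 := min_le_left (C.insert y + levenshtein C (x :: xs) ys)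
                (C.substitute x y + levenshtein C xs ys)
              have := Nat.mul_le_mul_right k hm
              have : (max (xs.length + 1) ys.length + 1) * k
                  = max (xs.length + 1) ys.length * k + k := by ring
              omega
          _ ≤ (C.insert y + k) + levenshtein (Levenshtein.Cost.addConst C k) (x :: xs) ys := by
              simp only [List.length_cons] at h
              have : (max (xs.length + 1) ys.length + 1) * k
                  = max (xs.length + 1) ys.length * k + k := by ring
              omega
          _ = _ := rfl
      · have h := ih ys
        have hm : max (xs.length + 1) (ys.length + 1) = max xs.length ys.length + 1 := by
          omega
        calc min _ (min _ (C.substitute x y + levenshtein C xs ys)) + max (xs.length + 1) (ys.length + 1) * k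
            ≤ C.substitute x y + levenshtein C xs ys + (max xs.length ys.length + 1) * k := by
              have h1 := min_le_right (C.delete x + levenshtein C xs (y :: ys))
                (min (C.insert y + levenshtein C (x :: xs) ys) (C.substitute x y + levenshtein C xs ys))
              have h2 := min_le_right (C.insert y + levenshtein C (x :: xs) ys)
                (C.substitute x y + levenshtein C xs ys)
              have h3 : (max xs.length ys.length + 1) * k
                  = max xs.length ys.length * k + k := by ring
              rw [hm]
              omega
          _ ≤ (C.substitute x y + k) + levenshtein (Levenshtein.Cost.addConst C k) xs ys := by
              have : (max xs.length ys.length + 1) * k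
                  = max xs.length ys.length * k + k := by ring
              omega
          _ = _ := rfl
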